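/- In the abstract setting with a homotopy operator h for d (h d + d h = id), operators d_T, P with P d_T = id, d_T commuting with d, and S with the projection property (for θ ∈ ker S, θ − d_T P θ = θ): if θ ∈ ker S satisfies δθ = 0 where δ = (id − d_T P) d, then setting κ = h P d θ and φ = h(θ − d_T κ), one has δφ = θ. -/
import Mathlib


/-- Abstract local exactness of the δ-sequence.  In the setting
with a homotopy operator `h` for `d` (`h d + d h = id` in degrees ≥ 1),
operators `d_T`, `P` with `P d_T = id`, `d_T` commuting with `d`, and `S` with
the projection property (`P θ = 0` for `θ ∈ ker S`, so `θ − d_T P θ = θ` there):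
if `θ ∈ ker S` satisfies `δθ = 0` where `δ = (id − d_T P) d`, then setting
`κ = h P d θ` and `φ = h(θ − d_T κ)`, one has `δφ = θ`. -/
theorem local_exactness_of_delta
    {Ω : ℕ → Type*} [∀ r, AddCommGroup (Ω r)] [∀ r, Module ℚ (Ω r)]
    (d : ∀ r, Ω r →ₗ[ℚ] Ω (r + 1)) (dT P S : ∀ r, Ω r →ₗ[ℚ] Ω r)
    (h : ∀ r, Ω (r + 1) →ₗ[ℚ] Ω r)
    (hd2 : ∀ (r : ℕ) (θ : Ω r), d (r + 1) (d r θ) = 0)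
    (hcomm : ∀ (r : ℕ) (θ : Ω r), d r (dT r θ) = dT (r + 1) (d r θ))
    (hPdT : ∀ (r : ℕ) (θ : Ω (r + 1)), P (r + 1) (dT (r + 1) θ) = θ)
    (hh : ∀ (r : ℕ) (η : Ω (r + 1)), h (r + 1) (d (r + 1) η) + d r (h r η) = η)
    (hSP : ∀ (r : ℕ) (θ : Ω r), S r θ = 0 → P r θ = 0)
    (r : ℕ) (θ : Ω (r + 1))
    (hS : S (r + 1) θ = 0)
    (hδ : d (r + 1) θ - dT (r + 2) (P (r + 2) (d (r + 1) θ)) = 0) :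
    d r (h r (θ - dT (r + 1) (h (r + 1) (P (r + 2) (d (r + 1) θ))))) -
      dT (r + 1) (P (r + 1)
        (d r (h r (θ - dT (r + 1) (h (r + 1) (P (r + 2) (d (r + 1) θ))))))) = θ := by
  have h1 : d (r + 1) θ = dT (r + 2) (P (r + 2) (d (r + 1) θ)) := sub_eq_zero.mp hδ
  -- dPdθ = 0
  have h2 : d (r + 2) (P (r + 2) (d (r + 1) θ)) = 0 := by
    have := hd2 (r + 1) θ
    rw [h1, hcomm] at this
    have := congrArg (P (r + 3)) this
    rwa [hPdT, map_zero] at this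
  -- dκ = Pdθ
  have h3 : d (r + 1) (h (r + 1) (P (r + 2) (d (r + 1) θ))) = P (r + 2) (d (r + 1) θ) := by
    have := hh (r + 1) (P (r + 2) (d (r + 1) θ))
    rwa [h2, map_zero, zero_add] at this
  -- d(θ - dT κ) = 0
  have h4 : d (r + 1) (θ - dT (r + 1) (h (r + 1) (P (r + 2) (d (r + 1) θ)))) = 0 := by
    rw [map_sub, hcomm, h3, ← h1, sub_self]
  -- dφ = θ - dT κ
  have h5 : d r (h r (θ - dT (r + 1) (h (r + 1) (P (r + 2) (d (r + 1) θ)))))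
      = θ - dT (r + 1) (h (r + 1) (P (r + 2) (d (r + 1) θ))) := by
    have := hh r (θ - dT (r + 1) (h (r + 1) (P (r + 2) (d (r + 1) θ))))
    rwa [h4, map_zero, zero_add] at this
  rw [h5, map_sub, hSP (r + 1) θ hS, hPdT, zero_sub, map_neg, sub_neg_eq_add,
    sub_add_cancel]
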